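/- arXiv:2007.05375 — 2 statements merged into one kernel-verified Lean document; each statement's English description precedes it below -/
import Mathlib

section
/- Let M be an alternative O-bimodule with M = O·A(M) and Re(x) = (5/12)x - (1/12)Σ_{i=1}^{7} e_i x e_i. Then every x ∈ M satisfies the reconstruction formula x = Re(x) - Σ_{i=1}^{7} e_i Re(e_i x). -/
noncomputable section

open scoped Quaternion

/-- The octonions, built from pairs of quaternions via the Cayley–Dickson construction. -/
def Octonion : Type := ℍ[ℝ] × ℍ[ℝ]

namespace Octonion

def mk' (a b : ℍ[ℝ]) : Octonion := Prod.mk a b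
def q1 (x : Octonion) : ℍ[ℝ] := Prod.fst x
def q2 (x : Octonion) : ℍ[ℝ] := Prod.snd x

instance : AddCommGroup Octonion := inferInstanceAs (AddCommGroup (ℍ[ℝ] × ℍ[ℝ]))
instance : Module ℝ Octonion := inferInstanceAs (Module ℝ (ℍ[ℝ] × ℍ[ℝ]))
instance : One Octonion := ⟨mk' 1 0⟩
instance : Mul Octonion :=
  ⟨fun x y => mk' (q1 x * q1 y - star (q2 y) * q2 x) (q2 y * q1 x + q2 x * star (q1 y))⟩

/-- Octonion conjugation. -/
def conj (x : Octonion) : Octonion := mk' (star (q1 x)) (-(q2 x))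

/-- The real part of an octonion. -/
def re (x : Octonion) : ℝ := (q1 x).re

/-- The standard basis `e 0 = 1, e 1, …, e 7` of the octonions. -/
def e : Fin 8 → Octonion :=
  ![mk' 1 0, mk' ⟨0,1,0,0⟩ 0, mk' ⟨0,0,1,0⟩ 0, mk' ⟨0,0,0,1⟩ 0,
    mk' 0 1, mk' 0 ⟨0,1,0,0⟩, mk' 0 ⟨0,0,1,0⟩, mk' 0 ⟨0,0,0,1⟩]

/-- The coordinates of an octonion with respect to the standard basis. -/
def coord (x : Octonion) : Fin 8 → ℝ :=
  ![(q1 x).re, (q1 x).imI, (q1 x).imJ, (q1 x).imK,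
    (q2 x).re, (q2 x).imI, (q2 x).imJ, (q2 x).imK]

end Octonion


namespace Octonion

def qk (a b c d : ℝ) : ℍ[ℝ] := ⟨a, b, c, d⟩
@[simp] lemma qk_re (a b c d : ℝ) : (qk a b c d).re = a := rfl
@[simp] lemma qk_imI (a b c d : ℝ) : (qk a b c d).imI = b := rfl
@[simp] lemma qk_imJ (a b c d : ℝ) : (qk a b c d).imJ = c := rfl
@[simp] lemma qk_imK (a b c d : ℝ) : (qk a b c d).imK = d := rfl

lemma es0 : e (0:Fin 7).succ = mk' (qk 0 1 0 0) 0 := rfl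
lemma es1 : e (1:Fin 7).succ = mk' (qk 0 0 1 0) 0 := rfl
lemma es2 : e (2:Fin 7).succ = mk' (qk 0 0 0 1) 0 := rfl
lemma es3 : e (3:Fin 7).succ = mk' 0 1 := rfl
lemma es4 : e (4:Fin 7).succ = mk' 0 (qk 0 1 0 0) := rfl
lemma es5 : e (5:Fin 7).succ = mk' 0 (qk 0 0 1 0) := rfl
lemma es6 : e (6:Fin 7).succ = mk' 0 (qk 0 0 0 1) := rfl
lemma smul_mk' (r : ℝ) (a b : ℍ[ℝ]) : r • (mk' a b) = mk' (r • a) (r • b) := rfl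
lemma mk'_mul_mk' (a b c d : ℍ[ℝ]) :
    mk' a b * mk' c d = mk' (a * c - star d * b) (d * a + b * star c) := rfl
lemma mk'_sub (a b c d : ℍ[ℝ]) : mk' a b - mk' c d = mk' (a - c) (b - d) := rfl
lemma mk'_add (a b c d : ℍ[ℝ]) : mk' a b + mk' c d = mk' (a + c) (b + d) := rfl
lemma mk'_q (x : Octonion) : mk' (q1 x) (q2 x) = x := rfl
lemma conj_mk' (a b : ℍ[ℝ]) : conj (mk' a b) = mk' (star a) (-b) := rfl
lemma mk'_inj {a b c d : ℍ[ℝ]} (h1 : a = c) (h2 : b = d) : mk' a b = mk' c d := by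
  unfold mk'; rw [h1, h2]

lemma qstar_smul (r : ℝ) (q : ℍ[ℝ]) : star (r • q) = r • star q := by
  ext <;> simp

lemma omul_add (x y z : Octonion) : x * (y + z) = x * y + x * z := by
  refine Prod.ext ?_ ?_
  · show q1 x * (q1 y + q1 z) - star (q2 y + q2 z) * q2 x
      = (q1 x * q1 y - star (q2 y) * q2 x) + (q1 x * q1 z - star (q2 z) * q2 x)
    rw [star_add, mul_add, add_mul]; abel
  · show (q2 y + q2 z) * q1 x + q2 x * star (q1 y + q1 z)
      = (q2 y * q1 x + q2 x * star (q1 y)) + (q2 z * q1 x + q2 x * star (q1 z))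
    rw [star_add, mul_add, add_mul]; abel

lemma omul_smul (r : ℝ) (x y : Octonion) : x * (r • y) = r • (x * y) := by
  refine Prod.ext ?_ ?_
  · show q1 x * (r • q1 y) - star (r • q2 y) * q2 x = r • (q1 x * q1 y - star (q2 y) * q2 x)
    rw [qstar_smul, mul_smul_comm, smul_mul_assoc, smul_sub]
  · show (r • q2 y) * q1 x + q2 x * star (r • q1 y) = r • (q2 y * q1 x + q2 x * star (q1 y))
    rw [qstar_smul, mul_smul_comm, smul_mul_assoc, smul_add]

lemma omul_sub (x y z : Octonion) : x * (y - z) = x * y - x * z := by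
  refine Prod.ext ?_ ?_
  · show q1 x * (q1 y - q1 z) - star (q2 y - q2 z) * q2 x
      = (q1 x * q1 y - star (q2 y) * q2 x) - (q1 x * q1 z - star (q2 z) * q2 x)
    rw [star_sub, mul_sub, sub_mul]; abel
  · show (q2 y - q2 z) * q1 x + q2 x * star (q1 y - q1 z)
      = (q2 y * q1 x + q2 x * star (q1 y)) - (q2 z * q1 x + q2 x * star (q1 z))
    rw [star_sub, mul_sub, sub_mul]; abel

/-- Left multiplication as a linear map. -/
def lmul (x : Octonion) : Octonion →ₗ[ℝ] Octonion where
  toFun y := x * y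
  map_add' := omul_add x
  map_smul' r y := omul_smul r x y

set_option maxHeartbeats 1000000 in
lemma sumL1 (q : Octonion) :
    ∑ j : Fin 7, ((e j.succ * q) * e j.succ) = (-1:ℝ) • q - (6:ℝ) • conj q := by
  rw [← mk'_q q]
  generalize q1 q = A
  generalize q2 q = B
  simp only [Fin.sum_univ_seven, es0, es1, es2, es3, es4, es5, es6, conj_mk',
    mk'_mul_mk', smul_mk', mk'_sub, mk'_add]
  refine mk'_inj ?_ ?_ <;> · ext <;> · simp; try ring

set_option maxHeartbeats 1000000 in
lemma sumL2 (q : Octonion) :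
    ∑ j : Fin 7, (e j.succ * (e j.succ * q)) = (-7:ℝ) • q := by
  rw [← mk'_q q]
  generalize q1 q = A
  generalize q2 q = B
  simp only [Fin.sum_univ_seven, es0, es1, es2, es3, es4, es5, es6,
    mk'_mul_mk', smul_mk', mk'_sub, mk'_add]
  refine mk'_inj ?_ ?_ <;> · ext <;> · simp; try ring

set_option maxHeartbeats 1000000 in
lemma sumL3 (q : Octonion) :
    ∑ j : Fin 7, (e j.succ * conj (e j.succ * q)) = conj q + (6:ℝ) • q := by
  rw [← mk'_q q]
  generalize q1 q = A
  generalize q2 q = B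
  simp only [Fin.sum_univ_seven, es0, es1, es2, es3, es4, es5, es6, conj_mk',
    mk'_mul_mk', smul_mk', mk'_sub, mk'_add]
  refine mk'_inj ?_ ?_ <;> · ext <;> · simp; try ring

/-- The octonion identity behind the reconstruction formula. -/
lemma big_id (p : Octonion) :
    ((5/12 : ℝ) • p - (1/12 : ℝ) • ∑ j : Fin 7, ((e j.succ * p) * e j.succ))
      - ∑ i : Fin 7, (e i.succ *
          ((5/12 : ℝ) • (e i.succ * p)
            - (1/12 : ℝ) • ∑ j : Fin 7, ((e j.succ * (e i.succ * p)) * e j.succ))) = p := by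
  have inner : ∀ i : Fin 7,
      e i.succ * ((5/12 : ℝ) • (e i.succ * p)
          - (1/12 : ℝ) • ∑ j : Fin 7, ((e j.succ * (e i.succ * p)) * e j.succ))
        = (1/2 : ℝ) • (e i.succ * (e i.succ * p))
          + (1/2 : ℝ) • (e i.succ * conj (e i.succ * p)) := by
    intro i
    rw [sumL1 (e i.succ * p), omul_sub, omul_smul, omul_smul, omul_sub, omul_smul, omul_smul]
    module
  rw [Finset.sum_congr rfl (fun i _ => inner i), Finset.sum_add_distrib,
    ← Finset.smul_sum, ← Finset.smul_sum, sumL2, sumL3, sumL1 p]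
  module

lemma assoc0 : (e 2 * e 4) * e 7 - e 2 * (e 4 * e 7) = (-2:ℝ) • e (0:Fin 7).succ := by
  rw [show e 2 = mk' (qk 0 0 1 0) 0 from rfl, show e 4 = mk' 0 1 from rfl,
    show e 7 = mk' 0 (qk 0 0 0 1) from rfl, es0,
    mk'_mul_mk', mk'_mul_mk', mk'_mul_mk', mk'_mul_mk', mk'_sub, smul_mk']
  refine mk'_inj ?_ ?_ <;> · ext <;> · simp; try norm_num

lemma assoc1 : (e 1 * e 4) * e 7 - e 1 * (e 4 * e 7) = (2:ℝ) • e (1:Fin 7).succ := by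
  rw [show e 1 = mk' (qk 0 1 0 0) 0 from rfl, show e 4 = mk' 0 1 from rfl,
    show e 7 = mk' 0 (qk 0 0 0 1) from rfl, es1,
    mk'_mul_mk', mk'_mul_mk', mk'_mul_mk', mk'_mul_mk', mk'_sub, smul_mk']
  refine mk'_inj ?_ ?_ <;> · ext <;> · simp; try norm_num

lemma assoc2 : (e 1 * e 4) * e 6 - e 1 * (e 4 * e 6) = (-2:ℝ) • e (2:Fin 7).succ := by
  rw [show e 1 = mk' (qk 0 1 0 0) 0 from rfl, show e 4 = mk' 0 1 from rfl,
    show e 6 = mk' 0 (qk 0 0 1 0) from rfl, es2,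
    mk'_mul_mk', mk'_mul_mk', mk'_mul_mk', mk'_mul_mk', mk'_sub, smul_mk']
  refine mk'_inj ?_ ?_ <;> · ext <;> · simp; try norm_num

lemma assoc3 : (e 1 * e 2) * e 7 - e 1 * (e 2 * e 7) = (-2:ℝ) • e (3:Fin 7).succ := by
  rw [show e 1 = mk' (qk 0 1 0 0) 0 from rfl, show e 2 = mk' (qk 0 0 1 0) 0 from rfl,
    show e 7 = mk' 0 (qk 0 0 0 1) from rfl, es3,
    mk'_mul_mk', mk'_mul_mk', mk'_mul_mk', mk'_mul_mk', mk'_sub, smul_mk']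
  refine mk'_inj ?_ ?_ <;> · ext <;> · simp; try norm_num

lemma assoc4 : (e 1 * e 2) * e 6 - e 1 * (e 2 * e 6) = (2:ℝ) • e (4:Fin 7).succ := by
  rw [show e 1 = mk' (qk 0 1 0 0) 0 from rfl, show e 2 = mk' (qk 0 0 1 0) 0 from rfl,
    show e 6 = mk' 0 (qk 0 0 1 0) from rfl, es4,
    mk'_mul_mk', mk'_mul_mk', mk'_mul_mk', mk'_mul_mk', mk'_sub, smul_mk']
  refine mk'_inj ?_ ?_ <;> · ext <;> · simp; try norm_num

lemma assoc5 : (e 1 * e 2) * e 5 - e 1 * (e 2 * e 5) = (-2:ℝ) • e (5:Fin 7).succ := by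
  rw [show e 1 = mk' (qk 0 1 0 0) 0 from rfl, show e 2 = mk' (qk 0 0 1 0) 0 from rfl,
    show e 5 = mk' 0 (qk 0 1 0 0) from rfl, es5,
    mk'_mul_mk', mk'_mul_mk', mk'_mul_mk', mk'_mul_mk', mk'_sub, smul_mk']
  refine mk'_inj ?_ ?_ <;> · ext <;> · simp; try norm_num

lemma assoc6 : (e 1 * e 2) * e 4 - e 1 * (e 2 * e 4) = (2:ℝ) • e (6:Fin 7).succ := by
  rw [show e 1 = mk' (qk 0 1 0 0) 0 from rfl, show e 2 = mk' (qk 0 0 1 0) 0 from rfl,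
    show e 4 = mk' 0 1 from rfl, es6,
    mk'_mul_mk', mk'_mul_mk', mk'_mul_mk', mk'_mul_mk', mk'_sub, smul_mk']
  refine mk'_inj ?_ ?_ <;> · ext <;> · simp; try norm_num

end Octonion

open Octonion in
/-- Reconstruction formula in an alternative `𝕆`-bimodule `M` with `M = 𝕆·A(M)`:
`x = Re x - ∑ᵢ eᵢ Re(eᵢ x)`. -/
theorem octonion_bimodule_reconstruction
    {M : Type*} [AddCommGroup M] [Module ℝ M]
    (L R : Octonion →ₗ[ℝ] M →ₗ[ℝ] M)
    (hL1 : ∀ m : M, L 1 m = m) (hR1 : ∀ m : M, R 1 m = m)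
    -- `[p,q,m] = [q,m,p]`
    (hLM : ∀ (p q : Octonion) (m : M),
      L (p * q) m - L p (L q m) = R p (L q m) - L q (R p m))
    -- `[q,m,p] = [m,p,q]`
    (hMR : ∀ (p q : Octonion) (m : M),
      R p (L q m) - L q (R p m) = R q (R p m) - R (p * q) m)
    -- `M = 𝕆 · A(M)`
    (hspan : ∀ m : M, m ∈ Submodule.span ℝ
      {y : M | ∃ (p : Octonion) (x : M),
        (∀ a b : Octonion, L (a * b) x = L a (L b x)) ∧ y = L p x})
    (ReM : M → M)
    (hRe : ∀ x : M, ReM x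
      = (5 / 12 : ℝ) • x
        - (1 / 12 : ℝ) • ∑ i : Fin 7, R (e i.succ) (L (e i.succ) x)) :
    ∀ x : M, x = ReM x - ∑ i : Fin 7, L (e i.succ) (ReM (L (e i.succ) x)) :=  by
  classical
  set E : M →ₗ[ℝ] M :=
    ((5/12 : ℝ) • LinearMap.id - (1/12 : ℝ) •
        ∑ j : Fin 7, (R (e j.succ)) ∘ₗ (L (e j.succ)))
      - ∑ i : Fin 7, (L (e i.succ)) ∘ₗ
          ((5/12 : ℝ) • (L (e i.succ)) - (1/12 : ℝ) •
            ∑ j : Fin 7, (R (e j.succ)) ∘ₗ (L (e j.succ)) ∘ₗ (L (e i.succ))) with hE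
  have hEapp : ∀ m : M,
      ReM m - ∑ i : Fin 7, L (e i.succ) (ReM (L (e i.succ) m)) = E m := by
    intro m
    simp only [hE, hRe, LinearMap.sub_apply, LinearMap.smul_apply, LinearMap.sum_apply,
      LinearMap.comp_apply, LinearMap.id_apply, map_sub, map_smul, map_sum]
  intro x
  rw [hEapp x]
  induction hspan x using Submodule.span_induction with
  | mem y hy =>
    obtain ⟨p, a, Ha, rfl⟩ := hy
    rw [← hEapp]
    have F1 : ∀ s t : Octonion, R s (L t a) = L t (R s a) := by
      intro s t
      have h := hLM s t a
      rw [Ha s t, sub_self] at h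
      exact sub_eq_zero.mp h.symm
    have F2 : ∀ s t : Octonion, R t (R s a) = R (s * t) a := by
      intro s t
      have h := hMR s t a
      rw [F1 s t, sub_self] at h
      exact sub_eq_zero.mp h.symm
    have master : ∀ s b c : Octonion,
        L ((s*b)*c - s*(b*c)) a = R ((s*b)*c - s*(b*c)) a := by
      intro s b c
      have e2 := hLM s b (L c a)
      rw [show L s (L b (L c a)) = L (s*(b*c)) a by rw [← Ha b c, ← Ha s (b*c)],
          show L (s*b) (L c a) = L ((s*b)*c) a from (Ha (s*b) c).symm,
          show R s (L b (L c a)) = L (b*c) (R s a) by rw [← Ha b c, F1 s (b*c)]] at e2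
      have e1 := hLM b c (R s a)
      rw [show L b (L c (R s a)) = L b (R s (L c a)) by rw [F1 s c]] at e1
      have e3 := hMR b c (R s a)
      rw [show R c (R b (R s a)) = R ((s*b)*c) a by rw [F2 s b, F2 (s*b) c],
          show R (b*c) (R s a) = R (s*(b*c)) a from F2 s (b*c)] at e3
      have key0 : L ((s*b)*c) a - L (s*(b*c)) a = R ((s*b)*c) a - R (s*(b*c)) a := by
        rw [e2, e1, e3]
      simpa only [map_sub, LinearMap.sub_apply] using key0
    have master2 : ∀ (s b c t : Octonion) (r : ℝ),
        (s*b)*c - s*(b*c) = r • t → r ≠ 0 → L t a = R t a := by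
      intro s b c t r hst hr
      have h := master s b c
      rw [hst] at h
      simp only [map_smul, LinearMap.smul_apply] at h
      have h2 := congrArg (fun z : M => (r⁻¹ : ℝ) • z) h
      simpa [smul_smul, inv_mul_cancel₀ hr] using h2
    have comm : ∀ j : Fin 7, L (e j.succ) a = R (e j.succ) a := by
      intro j
      fin_cases j
      · exact master2 _ _ _ _ _ assoc0 (by norm_num)
      · exact master2 _ _ _ _ _ assoc1 (by norm_num)
      · exact master2 _ _ _ _ _ assoc2 (by norm_num)
      · exact master2 _ _ _ _ _ assoc3 (by norm_num)
      · exact master2 _ _ _ _ _ assoc4 (by norm_num)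
      · exact master2 _ _ _ _ _ assoc5 (by norm_num)
      · exact master2 _ _ _ _ _ assoc6 (by norm_num)
    set T : Octonion →ₗ[ℝ] M := L.flip a with hT
    have hTapp : ∀ u : Octonion, T u = L u a := fun u => rfl
    have hTmul : ∀ u q : Octonion, T (u * q) = L u (T q) := fun u q => Ha u q
    have step : ∀ (j : Fin 7) (q : Octonion),
        R (e j.succ) (L (e j.succ) (T q)) = T ((e j.succ * q) * e j.succ) := by
      intro j q
      rw [hTapp, hTapp]
      rw [show L (e j.succ) (L q a) = L (e j.succ * q) a from (Ha _ q).symm,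
        F1 (e j.succ) (e j.succ * q), ← comm j, ← Ha (e j.succ * q) (e j.succ)]
    have key : ∀ q : Octonion, ReM (T q)
        = T ((5/12 : ℝ) • q - (1/12 : ℝ) • ∑ j : Fin 7, ((e j.succ * q) * e j.succ)) := by
      intro q
      rw [hRe, map_sub, map_smul, map_smul, map_sum]
      have hs : (∑ j : Fin 7, R (e j.succ) (L (e j.succ) (T q)))
          = ∑ j : Fin 7, T ((e j.succ * q) * e j.succ) :=
        Finset.sum_congr rfl fun j _ => step j q
      rw [hs]
    show T p = _
    calc T p = T (((5/12 : ℝ) • p - (1/12 : ℝ) • ∑ j : Fin 7, ((e j.succ * p) * e j.succ))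
        - ∑ i : Fin 7, (e i.succ *
          ((5/12 : ℝ) • (e i.succ * p)
            - (1/12 : ℝ) • ∑ j : Fin 7, ((e j.succ * (e i.succ * p)) * e j.succ)))) := by
          rw [big_id]
      _ = ReM (T p) - ∑ i : Fin 7, L (e i.succ) (ReM (L (e i.succ) (T p))) := by
          rw [map_sub, map_sum, ← key p]
          congr 1
          refine Finset.sum_congr rfl fun i _ => ?_
          rw [hTmul, ← key (e i.succ * p), hTmul]
  | zero => exact (map_zero E).symm
  | add y z hy hz ihy ihz => rw [map_add, ← ihy, ← ihz]
  | smul r y hy ihy => rw [map_smul, ← ihy]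
end
end

section
/- Let M and M' be alternative O-bimodules (each satisfying M = O·A(M)). Then every left O-module homomorphism f : M → M' (R-linear with f(px) = p f(x) for all p ∈ O, x ∈ M) is automatically a right O-module homomorphism: f(xp) = f(x)p for all x ∈ M, p ∈ O. -/
noncomputable section

open scoped Quaternion

namespace Octonion

lemma oct_ext' {x y : Octonion} (h1 : q1 x = q1 y) (h2 : q2 x = q2 y) : x = y :=
  Prod.ext h1 h2
lemma q1_mul (x y : Octonion) : q1 (x*y) = q1 x * q1 y - star (q2 y) * q2 x := rfl
lemma q2_mul (x y : Octonion) : q2 (x*y) = q2 y * q1 x + q2 x * star (q1 y) := rfl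
lemma q1_sub (x y : Octonion) : q1 (x - y) = q1 x - q1 y := rfl
lemma q2_sub (x y : Octonion) : q2 (x - y) = q2 x - q2 y := rfl
lemma q1_add (x y : Octonion) : q1 (x + y) = q1 x + q1 y := rfl
lemma q2_add (x y : Octonion) : q2 (x + y) = q2 x + q2 y := rfl
lemma q1_smul (c : ℝ) (x : Octonion) : q1 (c • x) = c • q1 x := rfl
lemma q2_smul (c : ℝ) (x : Octonion) : q2 (c • x) = c • q2 x := rfl
lemma q1_mk' (a b : ℍ[ℝ]) : q1 (mk' a b) = a := rfl
lemma q2_mk' (a b : ℍ[ℝ]) : q2 (mk' a b) = b := rfl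
def qm (a b c d : ℝ) : ℍ[ℝ] := ⟨a,b,c,d⟩
@[simp] lemma qm_re (a b c d : ℝ) : (qm a b c d).re = a := rfl
@[simp] lemma qm_imI (a b c d : ℝ) : (qm a b c d).imI = b := rfl
@[simp] lemma qm_imJ (a b c d : ℝ) : (qm a b c d).imJ = c := rfl
@[simp] lemma qm_imK (a b c d : ℝ) : (qm a b c d).imK = d := rfl
lemma oct_e0 : e 0 = (1 : Octonion) := rfl
lemma oct_e1 : e 1 = mk' (qm 0 1 0 0) 0 := rfl
lemma oct_e2 : e 2 = mk' (qm 0 0 1 0) 0 := rfl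
lemma oct_e3 : e 3 = mk' (qm 0 0 0 1) 0 := rfl
lemma oct_e4 : e 4 = mk' 0 1 := rfl
lemma oct_e5 : e 5 = mk' 0 (qm 0 1 0 0) := rfl
lemma oct_e6 : e 6 = mk' 0 (qm 0 0 1 0) := rfl
lemma oct_e7 : e 7 = mk' 0 (qm 0 0 0 1) := rfl
lemma oct_e0' : e 0 = mk' (qm 1 0 0 0) 0 := by
  have h : (1:ℍ[ℝ]) = qm 1 0 0 0 := by ext <;> simp
  show mk' 1 0 = _
  rw [h]

set_option maxHeartbeats 1000000 in
lemma oct_triples : True := trivial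

set_option maxHeartbeats 1000000 in
lemma assoc_1_0 : (e 2 * e 4) * e 7 - e 2 * (e 4 * e 7) = ((-2 : ℝ)) • e 1 := by
  simp only [oct_e0, oct_e1, oct_e2, oct_e3, oct_e4, oct_e5, oct_e6, oct_e7]
  apply oct_ext' <;>
  · simp only [q1_mul, q2_mul, q1_sub, q2_sub, q1_smul, q2_smul, q1_mk', q2_mk']
    ext <;>
      norm_num [Quaternion.re_mul, Quaternion.imI_mul,
        Quaternion.imJ_mul, Quaternion.imK_mul]

set_option maxHeartbeats 1000000 in
lemma assoc_1_1 : (e 4 * e 7) * e 2 - e 4 * (e 7 * e 2) = ((-2 : ℝ)) • e 1 := by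
  simp only [oct_e0, oct_e1, oct_e2, oct_e3, oct_e4, oct_e5, oct_e6, oct_e7]
  apply oct_ext' <;>
  · simp only [q1_mul, q2_mul, q1_sub, q2_sub, q1_smul, q2_smul, q1_mk', q2_mk']
    ext <;>
      norm_num [Quaternion.re_mul, Quaternion.imI_mul,
        Quaternion.imJ_mul, Quaternion.imK_mul]

set_option maxHeartbeats 1000000 in
lemma assoc_1_2 : (e 7 * e 2) * e 4 - e 7 * (e 2 * e 4) = ((-2 : ℝ)) • e 1 := by
  simp only [oct_e0, oct_e1, oct_e2, oct_e3, oct_e4, oct_e5, oct_e6, oct_e7]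
  apply oct_ext' <;>
  · simp only [q1_mul, q2_mul, q1_sub, q2_sub, q1_smul, q2_smul, q1_mk', q2_mk']
    ext <;>
      norm_num [Quaternion.re_mul, Quaternion.imI_mul,
        Quaternion.imJ_mul, Quaternion.imK_mul]

set_option maxHeartbeats 1000000 in
lemma assoc_2_0 : (e 1 * e 4) * e 7 - e 1 * (e 4 * e 7) = ((2 : ℝ)) • e 2 := by
  simp only [oct_e0, oct_e1, oct_e2, oct_e3, oct_e4, oct_e5, oct_e6, oct_e7]
  apply oct_ext' <;>
  · simp only [q1_mul, q2_mul, q1_sub, q2_sub, q1_smul, q2_smul, q1_mk', q2_mk']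
    ext <;>
      norm_num [Quaternion.re_mul, Quaternion.imI_mul,
        Quaternion.imJ_mul, Quaternion.imK_mul]

set_option maxHeartbeats 1000000 in
lemma assoc_2_1 : (e 4 * e 7) * e 1 - e 4 * (e 7 * e 1) = ((2 : ℝ)) • e 2 := by
  simp only [oct_e0, oct_e1, oct_e2, oct_e3, oct_e4, oct_e5, oct_e6, oct_e7]
  apply oct_ext' <;>
  · simp only [q1_mul, q2_mul, q1_sub, q2_sub, q1_smul, q2_smul, q1_mk', q2_mk']
    ext <;>
      norm_num [Quaternion.re_mul, Quaternion.imI_mul,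
        Quaternion.imJ_mul, Quaternion.imK_mul]

set_option maxHeartbeats 1000000 in
lemma assoc_2_2 : (e 7 * e 1) * e 4 - e 7 * (e 1 * e 4) = ((2 : ℝ)) • e 2 := by
  simp only [oct_e0, oct_e1, oct_e2, oct_e3, oct_e4, oct_e5, oct_e6, oct_e7]
  apply oct_ext' <;>
  · simp only [q1_mul, q2_mul, q1_sub, q2_sub, q1_smul, q2_smul, q1_mk', q2_mk']
    ext <;>
      norm_num [Quaternion.re_mul, Quaternion.imI_mul,
        Quaternion.imJ_mul, Quaternion.imK_mul]

set_option maxHeartbeats 1000000 in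
lemma assoc_3_0 : (e 1 * e 4) * e 6 - e 1 * (e 4 * e 6) = ((-2 : ℝ)) • e 3 := by
  simp only [oct_e0, oct_e1, oct_e2, oct_e3, oct_e4, oct_e5, oct_e6, oct_e7]
  apply oct_ext' <;>
  · simp only [q1_mul, q2_mul, q1_sub, q2_sub, q1_smul, q2_smul, q1_mk', q2_mk']
    ext <;>
      norm_num [Quaternion.re_mul, Quaternion.imI_mul,
        Quaternion.imJ_mul, Quaternion.imK_mul]

set_option maxHeartbeats 1000000 in
lemma assoc_3_1 : (e 4 * e 6) * e 1 - e 4 * (e 6 * e 1) = ((-2 : ℝ)) • e 3 := by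
  simp only [oct_e0, oct_e1, oct_e2, oct_e3, oct_e4, oct_e5, oct_e6, oct_e7]
  apply oct_ext' <;>
  · simp only [q1_mul, q2_mul, q1_sub, q2_sub, q1_smul, q2_smul, q1_mk', q2_mk']
    ext <;>
      norm_num [Quaternion.re_mul, Quaternion.imI_mul,
        Quaternion.imJ_mul, Quaternion.imK_mul]

set_option maxHeartbeats 1000000 in
lemma assoc_3_2 : (e 6 * e 1) * e 4 - e 6 * (e 1 * e 4) = ((-2 : ℝ)) • e 3 := by
  simp only [oct_e0, oct_e1, oct_e2, oct_e3, oct_e4, oct_e5, oct_e6, oct_e7]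
  apply oct_ext' <;>
  · simp only [q1_mul, q2_mul, q1_sub, q2_sub, q1_smul, q2_smul, q1_mk', q2_mk']
    ext <;>
      norm_num [Quaternion.re_mul, Quaternion.imI_mul,
        Quaternion.imJ_mul, Quaternion.imK_mul]

set_option maxHeartbeats 1000000 in
lemma assoc_4_0 : (e 1 * e 2) * e 7 - e 1 * (e 2 * e 7) = ((-2 : ℝ)) • e 4 := by
  simp only [oct_e0, oct_e1, oct_e2, oct_e3, oct_e4, oct_e5, oct_e6, oct_e7]
  apply oct_ext' <;>
  · simp only [q1_mul, q2_mul, q1_sub, q2_sub, q1_smul, q2_smul, q1_mk', q2_mk']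
    ext <;>
      norm_num [Quaternion.re_mul, Quaternion.imI_mul,
        Quaternion.imJ_mul, Quaternion.imK_mul]

set_option maxHeartbeats 1000000 in
lemma assoc_4_1 : (e 2 * e 7) * e 1 - e 2 * (e 7 * e 1) = ((-2 : ℝ)) • e 4 := by
  simp only [oct_e0, oct_e1, oct_e2, oct_e3, oct_e4, oct_e5, oct_e6, oct_e7]
  apply oct_ext' <;>
  · simp only [q1_mul, q2_mul, q1_sub, q2_sub, q1_smul, q2_smul, q1_mk', q2_mk']
    ext <;>
      norm_num [Quaternion.re_mul, Quaternion.imI_mul,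
        Quaternion.imJ_mul, Quaternion.imK_mul]

set_option maxHeartbeats 1000000 in
lemma assoc_4_2 : (e 7 * e 1) * e 2 - e 7 * (e 1 * e 2) = ((-2 : ℝ)) • e 4 := by
  simp only [oct_e0, oct_e1, oct_e2, oct_e3, oct_e4, oct_e5, oct_e6, oct_e7]
  apply oct_ext' <;>
  · simp only [q1_mul, q2_mul, q1_sub, q2_sub, q1_smul, q2_smul, q1_mk', q2_mk']
    ext <;>
      norm_num [Quaternion.re_mul, Quaternion.imI_mul,
        Quaternion.imJ_mul, Quaternion.imK_mul]

set_option maxHeartbeats 1000000 in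
lemma assoc_5_0 : (e 1 * e 2) * e 6 - e 1 * (e 2 * e 6) = ((2 : ℝ)) • e 5 := by
  simp only [oct_e0, oct_e1, oct_e2, oct_e3, oct_e4, oct_e5, oct_e6, oct_e7]
  apply oct_ext' <;>
  · simp only [q1_mul, q2_mul, q1_sub, q2_sub, q1_smul, q2_smul, q1_mk', q2_mk']
    ext <;>
      norm_num [Quaternion.re_mul, Quaternion.imI_mul,
        Quaternion.imJ_mul, Quaternion.imK_mul]

set_option maxHeartbeats 1000000 in
lemma assoc_5_1 : (e 2 * e 6) * e 1 - e 2 * (e 6 * e 1) = ((2 : ℝ)) • e 5 := by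
  simp only [oct_e0, oct_e1, oct_e2, oct_e3, oct_e4, oct_e5, oct_e6, oct_e7]
  apply oct_ext' <;>
  · simp only [q1_mul, q2_mul, q1_sub, q2_sub, q1_smul, q2_smul, q1_mk', q2_mk']
    ext <;>
      norm_num [Quaternion.re_mul, Quaternion.imI_mul,
        Quaternion.imJ_mul, Quaternion.imK_mul]

set_option maxHeartbeats 1000000 in
lemma assoc_5_2 : (e 6 * e 1) * e 2 - e 6 * (e 1 * e 2) = ((2 : ℝ)) • e 5 := by
  simp only [oct_e0, oct_e1, oct_e2, oct_e3, oct_e4, oct_e5, oct_e6, oct_e7]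
  apply oct_ext' <;>
  · simp only [q1_mul, q2_mul, q1_sub, q2_sub, q1_smul, q2_smul, q1_mk', q2_mk']
    ext <;>
      norm_num [Quaternion.re_mul, Quaternion.imI_mul,
        Quaternion.imJ_mul, Quaternion.imK_mul]

set_option maxHeartbeats 1000000 in
lemma assoc_6_0 : (e 1 * e 2) * e 5 - e 1 * (e 2 * e 5) = ((-2 : ℝ)) • e 6 := by
  simp only [oct_e0, oct_e1, oct_e2, oct_e3, oct_e4, oct_e5, oct_e6, oct_e7]
  apply oct_ext' <;>
  · simp only [q1_mul, q2_mul, q1_sub, q2_sub, q1_smul, q2_smul, q1_mk', q2_mk']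
    ext <;>
      norm_num [Quaternion.re_mul, Quaternion.imI_mul,
        Quaternion.imJ_mul, Quaternion.imK_mul]

set_option maxHeartbeats 1000000 in
lemma assoc_6_1 : (e 2 * e 5) * e 1 - e 2 * (e 5 * e 1) = ((-2 : ℝ)) • e 6 := by
  simp only [oct_e0, oct_e1, oct_e2, oct_e3, oct_e4, oct_e5, oct_e6, oct_e7]
  apply oct_ext' <;>
  · simp only [q1_mul, q2_mul, q1_sub, q2_sub, q1_smul, q2_smul, q1_mk', q2_mk']
    ext <;>
      norm_num [Quaternion.re_mul, Quaternion.imI_mul,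
        Quaternion.imJ_mul, Quaternion.imK_mul]

set_option maxHeartbeats 1000000 in
lemma assoc_6_2 : (e 5 * e 1) * e 2 - e 5 * (e 1 * e 2) = ((-2 : ℝ)) • e 6 := by
  simp only [oct_e0, oct_e1, oct_e2, oct_e3, oct_e4, oct_e5, oct_e6, oct_e7]
  apply oct_ext' <;>
  · simp only [q1_mul, q2_mul, q1_sub, q2_sub, q1_smul, q2_smul, q1_mk', q2_mk']
    ext <;>
      norm_num [Quaternion.re_mul, Quaternion.imI_mul,
        Quaternion.imJ_mul, Quaternion.imK_mul]

set_option maxHeartbeats 1000000 in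
lemma assoc_7_0 : (e 1 * e 2) * e 4 - e 1 * (e 2 * e 4) = ((2 : ℝ)) • e 7 := by
  simp only [oct_e0, oct_e1, oct_e2, oct_e3, oct_e4, oct_e5, oct_e6, oct_e7]
  apply oct_ext' <;>
  · simp only [q1_mul, q2_mul, q1_sub, q2_sub, q1_smul, q2_smul, q1_mk', q2_mk']
    ext <;>
      norm_num [Quaternion.re_mul, Quaternion.imI_mul,
        Quaternion.imJ_mul, Quaternion.imK_mul]

set_option maxHeartbeats 1000000 in
lemma assoc_7_1 : (e 2 * e 4) * e 1 - e 2 * (e 4 * e 1) = ((2 : ℝ)) • e 7 := by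
  simp only [oct_e0, oct_e1, oct_e2, oct_e3, oct_e4, oct_e5, oct_e6, oct_e7]
  apply oct_ext' <;>
  · simp only [q1_mul, q2_mul, q1_sub, q2_sub, q1_smul, q2_smul, q1_mk', q2_mk']
    ext <;>
      norm_num [Quaternion.re_mul, Quaternion.imI_mul,
        Quaternion.imJ_mul, Quaternion.imK_mul]

set_option maxHeartbeats 1000000 in
lemma assoc_7_2 : (e 4 * e 1) * e 2 - e 4 * (e 1 * e 2) = ((2 : ℝ)) • e 7 := by
  simp only [oct_e0, oct_e1, oct_e2, oct_e3, oct_e4, oct_e5, oct_e6, oct_e7]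
  apply oct_ext' <;>
  · simp only [q1_mul, q2_mul, q1_sub, q2_sub, q1_smul, q2_smul, q1_mk', q2_mk']
    ext <;>
      norm_num [Quaternion.re_mul, Quaternion.imI_mul,
        Quaternion.imJ_mul, Quaternion.imK_mul]

end Octonion
namespace Octonion

lemma oct_expand (x : Octonion) :
    x = coord x 0 • e 0 + coord x 1 • e 1 + coord x 2 • e 2 + coord x 3 • e 3 +
        coord x 4 • e 4 + coord x 5 • e 5 + coord x 6 • e 6 + coord x 7 • e 7 := by
  have c0 : coord x 0 = (q1 x).re := rfl
  have c1 : coord x 1 = (q1 x).imI := rfl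
  have c2 : coord x 2 = (q1 x).imJ := rfl
  have c3 : coord x 3 = (q1 x).imK := rfl
  have c4 : coord x 4 = (q2 x).re := rfl
  have c5 : coord x 5 = (q2 x).imI := rfl
  have c6 : coord x 6 = (q2 x).imJ := rfl
  have c7 : coord x 7 = (q2 x).imK := rfl
  simp only [c0, c1, c2, c3, c4, c5, c6, c7,
    oct_e0', oct_e1, oct_e2, oct_e3, oct_e4, oct_e5, oct_e6, oct_e7]
  apply oct_ext' <;>
  · simp only [q1_add, q2_add, q1_smul, q2_smul, q1_mk', q2_mk']
    ext <;> simp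

end Octonion
section Core

open Octonion

variable {N : Type*} [AddCommGroup N] [Module ℝ N]

/-- In an "alternative bimodule" the left and right actions commute at an
associative element. -/
lemma oct_commRL (L R : Octonion →ₗ[ℝ] N →ₗ[ℝ] N)
    (hLM : ∀ (p q : Octonion) (m : N),
      L (p * q) m - L p (L q m) = R p (L q m) - L q (R p m))
    {y : N} (hy : ∀ a b : Octonion, L (a * b) y = L a (L b y))
    (p q : Octonion) : R p (L q y) = L q (R p y) := by
  have h := hLM p q y
  rw [hy p q, sub_self] at h
  exact sub_eq_zero.mp h.symm

lemma oct_RB (L R : Octonion →ₗ[ℝ] N →ₗ[ℝ] N)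
    (hLM : ∀ (p q : Octonion) (m : N),
      L (p * q) m - L p (L q m) = R p (L q m) - L q (R p m))
    (hMR : ∀ (p q : Octonion) (m : N),
      R p (L q m) - L q (R p m) = R q (R p m) - R (p * q) m)
    {y : N} (hy : ∀ a b : Octonion, L (a * b) y = L a (L b y))
    (p q : Octonion) : R (p * q) y = R q (R p y) := by
  have h := hMR p q y
  rw [oct_commRL L R hLM hy p q, sub_self] at h
  exact (sub_eq_zero.mp h.symm).symm

/-- The central lemma: at an associative element of an alternative bimodule over
the octonions, the right action coincides with the left action. -/
lemma oct_central (L R : Octonion →ₗ[ℝ] N →ₗ[ℝ] N)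
    (hL1 : ∀ m : N, L 1 m = m) (hR1 : ∀ m : N, R 1 m = m)
    (hLM : ∀ (p q : Octonion) (m : N),
      L (p * q) m - L p (L q m) = R p (L q m) - L q (R p m))
    (hMR : ∀ (p q : Octonion) (m : N),
      R p (L q m) - L q (R p m) = R q (R p m) - R (p * q) m)
    {y : N} (hy : ∀ a b : Octonion, L (a * b) y = L a (L b y))
    (p : Octonion) : R p y = L p y := by
  have hYA := oct_commRL L R hLM hy
  have hYB := oct_RB L R hLM hMR hy
  set c : Octonion →ₗ[ℝ] N :=
    (LinearMap.applyₗ y).comp R - (LinearMap.applyₗ y).comp L with hcdef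
  have hcp : ∀ p : Octonion, c p = R p y - L p y := fun _ => rfl
  -- multiplicativity-type identity for c
  have hstar : ∀ a b : Octonion, c (a * b) = L a (c b) + R b (c a) := by
    intro a b
    rw [hcp, hcp, hcp, hYB a b, hy a b, map_sub (L a), map_sub (R b), hYA b a]
    abel
  have hIV : ∀ p q r : Octonion,
      R p (L q (L r y)) - L q (R p (L r y)) = L ((p*q)*r) y - L (p*(q*r)) y := by
    intro p q r
    calc R p (L q (L r y)) - L q (R p (L r y))
        = L (p*q) (L r y) - L p (L q (L r y)) := (hLM p q (L r y)).symm
      _ = L ((p*q)*r) y - L (p*(q*r)) y := by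
          rw [← hy (p*q) r, ← hy q r, ← hy p (q*r)]
  have hV : ∀ p q r : Octonion,
      R q (L r (R p y)) - L r (R q (R p y)) = R ((p*q)*r) y - R (p*(q*r)) y := by
    intro p q r
    calc R q (L r (R p y)) - L r (R q (R p y))
        = R r (R q (R p y)) - R (q*r) (R p y) := hMR q r (R p y)
      _ = R ((p*q)*r) y - R (p*(q*r)) y := by
          rw [← hYB p q, ← hYB (p*q) r, ← hYB p (q*r)]
  have hVI : ∀ p q r : Octonion,
      R q (L r (c p)) - L r (R q (c p)) =
        (R ((p*q)*r) y - R (p*(q*r)) y) - (L ((q*r)*p) y - L (q*(r*p)) y) := by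
    intro p q r
    rw [hcp p, map_sub (L r), map_sub (R q), map_sub (R q), map_sub (L r)]
    calc (R q (L r (R p y)) - R q (L r (L p y))) -
          (L r (R q (R p y)) - L r (R q (L p y)))
        = (R q (L r (R p y)) - L r (R q (R p y))) -
            (R q (L r (L p y)) - L r (R q (L p y))) := by abel
      _ = (R ((p*q)*r) y - R (p*(q*r)) y) - (L ((q*r)*p) y - L (q*(r*p)) y) := by
          rw [hV p q r, hIV q r p]
  have hVII : ∀ p q r : Octonion,
      c ((p*q)*r) - c (p*(q*r)) =
        (R p (L q (c r)) - L q (R p (c r))) + (R r (L p (c q)) - L p (R r (c q)))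
          + (R q (L r (c p)) - L r (R q (c p))) := by
    intro p q r
    have h1 : c ((p*q)*r) = L (p*q) (c r) + (R r (L p (c q)) + R r (R q (c p))) := by
      rw [hstar (p*q) r, hstar p q, map_add (R r)]
    have h2 : c (p*(q*r)) = L p (L q (c r)) + L p (R r (c q)) + R (q*r) (c p) := by
      rw [hstar p (q*r), hstar q r, map_add (L p)]
    rw [h1, h2, eq_add_of_sub_eq (hLM p q (c r)),
      eq_add_of_sub_eq (hMR q r (c p)).symm]
    abel
  -- for any triple whose three cyclic associators all equal `s`, `c s = 0`
  have key : ∀ p q r s : Octonion,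
      (p*q)*r - p*(q*r) = s → (q*r)*p - q*(r*p) = s → (r*p)*q - r*(p*q) = s →
      c s = 0 := by
    intro p q r s h1 h2 h3
    have hR3 : ∀ a b : Octonion, a - b = s → R a y - R b y = R s y := by
      intro a b h
      rw [← h, map_sub R, LinearMap.sub_apply]
    have hL3 : ∀ a b : Octonion, a - b = s → L a y - L b y = L s y := by
      intro a b h
      rw [← h, map_sub L, LinearMap.sub_apply]
    have t1 : R q (L r (c p)) - L r (R q (c p)) = c s := by
      rw [hVI p q r, hR3 _ _ h1, hL3 _ _ h2, hcp]
    have t2 : R p (L q (c r)) - L q (R p (c r)) = c s := by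
      rw [hVI r p q, hR3 _ _ h3, hL3 _ _ h1, hcp]
    have t3 : R r (L p (c q)) - L p (R r (c q)) = c s := by
      rw [hVI q r p, hR3 _ _ h2, hL3 _ _ h3, hcp]
    have t0 : c ((p*q)*r) - c (p*(q*r)) = c s := by rw [← map_sub, h1]
    have big := hVII p q r
    rw [t0, t1, t2, t3] at big
    -- big : c s = c s + c s + c s
    have hz : c s + c s = 0 := by
      have h0 : c s - (c s + c s + c s) = 0 := sub_eq_zero.mpr big
      calc c s + c s = -(c s - (c s + c s + c s)) := by abel
        _ = 0 := by rw [h0, neg_zero]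
    have h2s : (2 : ℝ) • c s = 0 := by rw [two_smul]; exact hz
    have := smul_eq_zero.mp h2s
    simpa using this
  -- c vanishes on the basis
  have hsm : ∀ (t : ℝ) (i : Fin 8), t ≠ 0 → c (t • e i) = 0 → c (e i) = 0 := by
    intro t i ht h
    rw [map_smul] at h
    simpa [ht] using smul_eq_zero.mp h
  have hce0 : c (e 0) = 0 := by rw [oct_e0, hcp, hL1, hR1, sub_self]
  have hce1 : c (e 1) = 0 :=
    hsm (-2) 1 (by norm_num) (key _ _ _ _ assoc_1_0 assoc_1_1 assoc_1_2)
  have hce2 : c (e 2) = 0 :=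
    hsm 2 2 (by norm_num) (key _ _ _ _ assoc_2_0 assoc_2_1 assoc_2_2)
  have hce3 : c (e 3) = 0 :=
    hsm (-2) 3 (by norm_num) (key _ _ _ _ assoc_3_0 assoc_3_1 assoc_3_2)
  have hce4 : c (e 4) = 0 :=
    hsm (-2) 4 (by norm_num) (key _ _ _ _ assoc_4_0 assoc_4_1 assoc_4_2)
  have hce5 : c (e 5) = 0 :=
    hsm 2 5 (by norm_num) (key _ _ _ _ assoc_5_0 assoc_5_1 assoc_5_2)
  have hce6 : c (e 6) = 0 :=
    hsm (-2) 6 (by norm_num) (key _ _ _ _ assoc_6_0 assoc_6_1 assoc_6_2)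
  have hce7 : c (e 7) = 0 :=
    hsm 2 7 (by norm_num) (key _ _ _ _ assoc_7_0 assoc_7_1 assoc_7_2)
  have hcz : c p = 0 := by
    conv_lhs => rw [oct_expand p]
    simp only [map_add, map_smul, hce0, hce1, hce2, hce3, hce4, hce5, hce6, hce7]
    simp
  rw [hcp p] at hcz
  exact sub_eq_zero.mp hcz

end Core
open Octonion in
/-- Between alternative `𝕆`-bimodules `M, M'` (each with `M = 𝕆·A(M)`), every
left `𝕆`-module homomorphism is automatically a right `𝕆`-module homomorphism. -/
theorem octonion_bimodule_left_hom_is_right_hom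
    {M M' : Type*} [AddCommGroup M] [Module ℝ M] [AddCommGroup M'] [Module ℝ M']
    (L R : Octonion →ₗ[ℝ] M →ₗ[ℝ] M)
    (hL1 : ∀ m : M, L 1 m = m) (hR1 : ∀ m : M, R 1 m = m)
    (hLM : ∀ (p q : Octonion) (m : M),
      L (p * q) m - L p (L q m) = R p (L q m) - L q (R p m))
    (hMR : ∀ (p q : Octonion) (m : M),
      R p (L q m) - L q (R p m) = R q (R p m) - R (p * q) m)
    (hspan : ∀ m : M, m ∈ Submodule.span ℝ
      {y : M | ∃ (p : Octonion) (x : M),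
        (∀ a b : Octonion, L (a * b) x = L a (L b x)) ∧ y = L p x})
    (L' R' : Octonion →ₗ[ℝ] M' →ₗ[ℝ] M')
    (hL1' : ∀ m : M', L' 1 m = m) (hR1' : ∀ m : M', R' 1 m = m)
    (hLM' : ∀ (p q : Octonion) (m : M'),
      L' (p * q) m - L' p (L' q m) = R' p (L' q m) - L' q (R' p m))
    (hMR' : ∀ (p q : Octonion) (m : M'),
      R' p (L' q m) - L' q (R' p m) = R' q (R' p m) - R' (p * q) m)
    (hspan' : ∀ m : M', m ∈ Submodule.span ℝ
      {y : M' | ∃ (p : Octonion) (x : M'),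
        (∀ a b : Octonion, L' (a * b) x = L' a (L' b x)) ∧ y = L' p x})
    (f : M →ₗ[ℝ] M')
    (hf : ∀ (p : Octonion) (x : M), f (L p x) = L' p (f x)) :
    ∀ (x : M) (p : Octonion), f (R p x) = R' p (f x) := by
  intro x p
  refine Submodule.span_induction (p := fun m _ => f (R p m) = R' p (f m))
    ?_ ?_ ?_ ?_ (hspan x)
  · rintro m ⟨q, x0, hx0, rfl⟩
    -- f x0 is associative in M'
    have hfx0 : ∀ a b : Octonion, L' (a * b) (f x0) = L' a (L' b (f x0)) := by
      intro a b
      rw [← hf, ← hf, ← hf, hx0]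
    calc f (R p (L q x0))
        = f (L q (R p x0)) := by rw [oct_commRL L R hLM hx0 p q]
      _ = f (L q (L p x0)) := by rw [oct_central L R hL1 hR1 hLM hMR hx0 p]
      _ = L' q (L' p (f x0)) := by rw [hf, hf]
      _ = L' q (R' p (f x0)) := by rw [oct_central L' R' hL1' hR1' hLM' hMR' hfx0 p]
      _ = R' p (L' q (f x0)) := by rw [oct_commRL L' R' hLM' hfx0 p q]
      _ = R' p (f (L q x0)) := by rw [hf]
  · simp
  · intro a b _ _ ha hb
    simp [map_add, ha, hb]
  · intro t a _ ha
    simp [map_smul, ha]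
end
end
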